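/- For every θ > 0, the matrix H is row-stochastic (all entries are nonnegative and each row sums to 1), and its eigenvalues are exactly 0, (θ² − 1)²(1 + θ²)/D, and 1. -/

import Mathlib

set_option maxHeartbeats 2000000


/-- for every θ > 0 the matrix H is row-stochastic and its eigenvalues
are exactly 0, (θ² − 1)²(1 + θ²)/D and 1. -/
theorem stmt_14 (θ : ℝ) (hθ : 0 < θ)
    (D : ℝ) (hD : D = 1 + 3*θ^2 + 4*θ^3 + 3*θ^4 + θ^6)
    (H : Matrix (Fin 3) (Fin 3) ℝ)
    (hH : H = (1/D) •
      !![(1 + θ^2)*(1 + θ^4), 4*θ^3, 2*θ^2*(1 + θ^2);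
         (1 + θ^2)^3/2, 4*θ^3, (1 + θ^2)^3/2;
         2*θ^2*(1 + θ^2), 4*θ^3, (1 + θ^2)*(1 + θ^4)]) :
    (∀ i j, 0 ≤ H i j) ∧ (∀ i, ∑ j, H i j = 1) ∧
    spectrum ℝ H = {0, (θ^2 - 1)^2*(1 + θ^2)/D, 1} := by
  have hθ3 : 0 < θ^3 := pow_pos hθ 3
  have hDpos : 0 < D := by rw [hD]; nlinarith [sq_nonneg θ, sq_nonneg (θ^2), sq_nonneg (θ^3)]
  have hDne : D ≠ 0 := ne_of_gt hDpos
  refine ⟨?_, ?_, ?_⟩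
  · intro i j
    fin_cases i <;> fin_cases j <;>
      simp [hH, Matrix.smul_apply, Matrix.vecHead, Matrix.vecTail] <;> positivity
  · intro i
    fin_cases i <;>
      simp [hH, Fin.sum_univ_three, Matrix.vecHead, Matrix.vecTail] <;> field_simp <;> rw [hD] <;> ring
  · ext μ
    have hmem : μ ∈ spectrum ℝ H ↔ Matrix.det (algebraMap ℝ (Matrix (Fin 3) (Fin 3) ℝ) μ - H) = 0 := by
      rw [spectrum.mem_iff, Matrix.isUnit_iff_isUnit_det, isUnit_iff_ne_zero, not_ne_iff]
    have hdet : Matrix.det (algebraMap ℝ (Matrix (Fin 3) (Fin 3) ℝ) μ - H)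
        = μ * (μ - 1) * (μ - (θ^2 - 1)^2*(1 + θ^2)/D) := by
      rw [Matrix.det_fin_three]
      simp only [Matrix.sub_apply, Matrix.algebraMap_matrix_apply, Matrix.smul_apply, hH,
        Matrix.cons_val_zero, Matrix.cons_val_one, Matrix.head_cons, Matrix.head_fin_const,
        Matrix.cons_val_two, Matrix.tail_cons, Matrix.of_apply, Matrix.cons_val',
        Matrix.empty_val', Matrix.cons_val_fin_one, Matrix.vecHead, Matrix.vecTail,
        Function.comp_apply, Fin.succ_zero_eq_one, smul_eq_mul]
      simp only [Fin.reduceEq, ite_false, if_false, ite_true, Algebra.algebraMap_self_apply, zero_sub]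
      rw [hD]
      field_simp
      ring
    rw [hmem, hdet]
    simp only [Set.mem_insert_iff, Set.mem_singleton_iff, mul_eq_zero, sub_eq_zero]
    constructor
    · rintro ((h | h) | h)
      · exact Or.inl h
      · exact Or.inr (Or.inr h)
      · exact Or.inr (Or.inl h)
    · rintro (h | h | h)
      · exact Or.inl (Or.inl h)
      · exact Or.inr h
      · exact Or.inl (Or.inr h)
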